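/- Let Tₖ(u) = Σ_{i=1}^k aᵢuⁱ be the degree-k Taylor polynomial at u=0 of φ(u) = (1/2)(1-4u)^{-1/2} - 1/2, and define cₖ(t) = t + (2t-1)·Tₖ(t(1-t)). Then cₖ(0) = 0, cₖ(1) = 1, cₖ^{(i)}(0) = cₖ^{(i)}(1) = 0 for all i ∈ {1,…,k}, 0 ≤ cₖ(t) ≤ 1 for all t ∈ [0,1], and cₖ(t) + cₖ(1−t) = 1 for all t ∈ [0,1]. -/

import Mathlib

open Polynomial in
private lemma polyIterDeriv (p : Polynomial ℝ) (n : ℕ) :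
    iteratedDeriv n (fun x : ℝ => p.eval x) = fun x => (derivative^[n] p).eval x := by
  induction n with
  | zero => simp
  | succ n ih =>
    funext x
    rw [iteratedDeriv_succ, ih, Function.iterate_succ_apply']
    exact (Polynomial.hasDerivAt _ x).deriv

private lemma keyDeriv (a : ℕ → ℝ) (ha1 : a 1 = 1)
    (hr : ∀ i : ℕ, 1 ≤ i → ((i : ℝ) + 1) * a (i + 1) = (4 * i + 2) * a i)
    (k : ℕ) (t : ℝ) :
    HasDerivAt (fun t : ℝ => t + (2 * t - 1) * ∑ i ∈ Finset.Icc 1 k, a i * (t * (1 - t)) ^ i)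
      (((k : ℝ) + 1) * a (k + 1) * (t * (1 - t)) ^ k) t := by
  induction k with
  | zero =>
    simp only [show Finset.Icc 1 0 = ∅ by rfl, Finset.sum_empty, mul_zero, add_zero,
      Nat.cast_zero, zero_add, one_mul, pow_zero, mul_one, ha1]
    exact hasDerivAt_id t
  | succ k ih =>
    have hu : HasDerivAt (fun s : ℝ => s * (1 - s)) (1 - 2 * t) t := by
      have h := (hasDerivAt_id t).mul ((hasDerivAt_const t (1 : ℝ)).sub (hasDerivAt_id t))
      simp only [id_eq, one_mul, zero_sub] at h
      refine h.congr_deriv ?_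
      simp only [Pi.sub_apply, id_eq]
      ring
    have h2 : HasDerivAt (fun s : ℝ => (s * (1 - s)) ^ (k + 1))
        (((k : ℝ) + 1) * (t * (1 - t)) ^ k * (1 - 2 * t)) t := by
      have h := hu.pow (k + 1)
      simp only [Nat.add_sub_cancel] at h
      refine h.congr_deriv ?_
      push_cast; ring
    have hterm : HasDerivAt (fun s : ℝ => (2 * s - 1) * (a (k + 1) * (s * (1 - s)) ^ (k + 1)))
        (2 * (a (k + 1) * (t * (1 - t)) ^ (k + 1))
          + (2 * t - 1) * (a (k + 1) * (((k : ℝ) + 1) * (t * (1 - t)) ^ k * (1 - 2 * t)))) t := by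
      have h1 : HasDerivAt (fun s : ℝ => 2 * s - 1) 2 t := by
        simpa using ((hasDerivAt_id t).const_mul 2).sub_const 1
      exact h1.mul (h2.const_mul (a (k + 1)))
    have hadd := ih.add hterm
    have hfun : (fun s : ℝ => s + (2 * s - 1) * ∑ i ∈ Finset.Icc 1 (k + 1), a i * (s * (1 - s)) ^ i)
        = fun s : ℝ => (s + (2 * s - 1) * ∑ i ∈ Finset.Icc 1 k, a i * (s * (1 - s)) ^ i)
          + (2 * s - 1) * (a (k + 1) * (s * (1 - s)) ^ (k + 1)) := by
      funext s
      rw [Finset.sum_Icc_succ_top (by omega : 1 ≤ k + 1)]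
      ring
    rw [hfun]
    refine hadd.congr_deriv ?_
    symm
    have hrk := hr (k + 1) (by omega)
    push_cast at hrk ⊢
    rw [pow_succ]
    linear_combination ((t * (1 - t)) ^ k * (t * (1 - t))) * hrk

/-- Properties of `cₖ(t) = t + (2t-1)·Tₖ(t(1-t))`, where `Tₖ(u) = ∑_{i=1}^k aᵢuⁱ`
is the degree-`k` Taylor polynomial of `φ(u) = (1/2)(1-4u)^(-1/2) - 1/2` at `0`:
`cₖ(0) = 0`, `cₖ(1) = 1`, `cₖ^{(i)}(0) = cₖ^{(i)}(1) = 0` for `1 ≤ i ≤ k`,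
`0 ≤ cₖ ≤ 1` on `[0,1]`, and `cₖ(t) + cₖ(1-t) = 1` on `[0,1]`. -/
theorem concatenation_polynomial_taylor
    (k : ℕ) (a : ℕ → ℝ)
    (ha : ∀ i, 1 ≤ i →
      a i = (1 / 2) * ((4 : ℝ) ^ i / (Nat.factorial i : ℝ)) * ∏ j ∈ Finset.range i, ((j : ℝ) + 1 / 2))
    (c : ℝ → ℝ)
    (hc : ∀ t, c t = t + (2 * t - 1) * ∑ i ∈ Finset.Icc 1 k, a i * (t * (1 - t)) ^ i) :
    c 0 = 0 ∧ c 1 = 1 ∧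
      (∀ i : ℕ, 1 ≤ i → i ≤ k → iteratedDeriv i c 0 = 0 ∧ iteratedDeriv i c 1 = 0) ∧
      (∀ t ∈ Set.Icc (0 : ℝ) 1, 0 ≤ c t ∧ c t ≤ 1) ∧
      ∀ t ∈ Set.Icc (0 : ℝ) 1, c t + c (1 - t) = 1 := by
  -- basic facts about a
  have hapos : ∀ i, 1 ≤ i → 0 < a i := by
    intro i hi
    rw [ha i hi]
    have h1 : (0 : ℝ) < ∏ j ∈ Finset.range i, ((j : ℝ) + 1 / 2) :=
      Finset.prod_pos fun j _ => by positivity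
    have h2 : (0 : ℝ) < (Nat.factorial i : ℝ) := by
      exact_mod_cast Nat.factorial_pos i
    positivity
  have ha1 : a 1 = 1 := by
    rw [ha 1 le_rfl]
    simp [Finset.prod_range_one]
    norm_num
  have hr : ∀ i : ℕ, 1 ≤ i → ((i : ℝ) + 1) * a (i + 1) = (4 * i + 2) * a i := by
    intro i hi
    rw [ha i hi, ha (i + 1) (by omega), Finset.prod_range_succ, pow_succ, Nat.factorial_succ]
    have hf : ((Nat.factorial i : ℝ)) ≠ 0 := by
      exact_mod_cast (Nat.factorial_pos i).ne'
    push_cast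
    field_simp
    ring
  have hceq : c = fun t : ℝ => t + (2 * t - 1) * ∑ i ∈ Finset.Icc 1 k, a i * (t * (1 - t)) ^ i :=
    funext hc
  subst hceq
  set S : ℝ → ℝ := fun t => ∑ i ∈ Finset.Icc 1 k, a i * (t * (1 - t)) ^ i with hS
  have hSzero : ∀ t : ℝ, t * (1 - t) = 0 → S t = 0 := by
    intro t ht
    refine Finset.sum_eq_zero fun i hi => ?_
    rw [ht, zero_pow (by simp at hi; omega), mul_zero]
  have hd := keyDeriv a ha1 hr k
  have hc0 : (fun t : ℝ => t + (2 * t - 1) * S t) 0 = 0 := by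
    simp only
    rw [hSzero 0 (by ring)]; ring
  have hc1 : (fun t : ℝ => t + (2 * t - 1) * S t) 1 = 1 := by
    simp only
    rw [hSzero 1 (by ring)]; ring
  have hderiv : deriv (fun t : ℝ => t + (2 * t - 1) * S t)
      = fun t => ((k : ℝ) + 1) * a (k + 1) * (t * (1 - t)) ^ k :=
    funext fun t => (hd t).deriv
  refine ⟨hc0, hc1, ?_, ?_, ?_⟩
  · -- iterated derivatives
    intro i hi hik
    obtain ⟨j, rfl⟩ : ∃ j, i = j + 1 := ⟨i - 1, by omega⟩
    have hjk : j < k := by omega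
    have A := ((k : ℝ) + 1) * a (k + 1)
    set p : Polynomial ℝ := Polynomial.C (((k : ℝ) + 1) * a (k + 1)) *
      (Polynomial.X * (1 - Polynomial.X)) ^ k with hp
    have hpe : (fun t : ℝ => ((k : ℝ) + 1) * a (k + 1) * (t * (1 - t)) ^ k)
        = fun t => p.eval t := by
      funext t; simp [hp]
    have hpne : p ≠ 0 := by
      have hA : (((k : ℝ) + 1) * a (k + 1)) ≠ 0 := by
        have := hapos (k + 1) (by omega)
        positivity
      simp only [hp]
      apply mul_ne_zero
      · exact Polynomial.C_ne_zero.mpr hA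
      · apply pow_ne_zero
        intro h
        have := congrArg (Polynomial.coeff · 1) h
        simp [Polynomial.coeff_X_mul, Polynomial.mul_coeff_zero] at this
    have hmult : ∀ r : ℝ, r * (1 - r) = 0 → k ≤ p.rootMultiplicity r := by
      intro r hr0
      rw [Polynomial.le_rootMultiplicity_iff hpne]
      have : (Polynomial.X - Polynomial.C r) ∣ (Polynomial.X * (1 - Polynomial.X)) := by
        refine Polynomial.dvd_iff_isRoot.mpr ?_
        simp [Polynomial.IsRoot, hr0]
      exact Dvd.dvd.mul_left (pow_dvd_pow_of_dvd this k) _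
    have hiter : ∀ r : ℝ, r * (1 - r) = 0 →
        iteratedDeriv (j + 1) (fun t : ℝ => t + (2 * t - 1) * S t) r = 0 := by
      intro r hr0
      rw [iteratedDeriv_succ', hderiv, hpe, polyIterDeriv]
      exact Polynomial.isRoot_iterate_derivative_of_lt_rootMultiplicity
        (lt_of_lt_of_le hjk (hmult r hr0))
    exact ⟨hiter 0 (by ring), hiter 1 (by ring)⟩
  · -- bounds via monotonicity
    have hmono : MonotoneOn (fun t : ℝ => t + (2 * t - 1) * S t) (Set.Icc 0 1) := by
      apply monotoneOn_of_deriv_nonneg (convex_Icc 0 1)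
      · exact (Differentiable.continuous fun t => (hd t).differentiableAt).continuousOn
      · exact fun t _ => ((hd t).differentiableAt).differentiableWithinAt
      · intro t ht
        rw [interior_Icc] at ht
        rw [hderiv]
        have h1 : (0 : ℝ) ≤ t * (1 - t) := by nlinarith [ht.1, ht.2]
        have h2 : (0 : ℝ) < a (k + 1) := hapos (k + 1) (by omega)
        positivity
    intro t ht
    constructor
    · have := hmono (Set.left_mem_Icc.mpr one_pos.le) ht ht.1
      rw [hc0] at this; exact this
    · have := hmono ht (Set.right_mem_Icc.mpr one_pos.le) ht.2
      rw [hc1] at this; exact this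
  · -- symmetry
    intro t _
    simp only [hS]
    have hsym : ∑ i ∈ Finset.Icc 1 k, a i * ((1 - t) * (1 - (1 - t))) ^ i
        = ∑ i ∈ Finset.Icc 1 k, a i * (t * (1 - t)) ^ i := by
      refine Finset.sum_congr rfl fun i _ => ?_
      congr 1
      congr 1
      ring
    rw [hsym]
    ring
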